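/- Let 𝔸 be a compact closed symmetric strict monoidal category and let D be a cornering of 𝔸. Then for every object A of 𝔸 there is an isomorphism A^• ≅ (A*)^∘ in the strict monoidal category H D of horizontal cells of D, where A* is the dual of A in 𝔸. -/

import Mathlib

/-- A single-object double category: a horizontal edge monoid `H`, a vertical
edge monoid `V`, and cells indexed by top/bottom boundaries in `H` and
left/right boundaries in `V`, with associative and unital horizontal and
vertical composition satisfying the interchange law, and with the horizontal
and vertical identity cells on the respective units coinciding. -/
structure SODC where
  H : Type
  V : Type
  hMul : H → H → H
  hOne : H
  vMul : V → V → V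
  vOne : V
  hMul_assoc : ∀ a b c : H, hMul (hMul a b) c = hMul a (hMul b c)
  hOne_mul : ∀ a : H, hMul hOne a = a
  hMul_one : ∀ a : H, hMul a hOne = a
  vMul_assoc : ∀ x y z : V, vMul (vMul x y) z = vMul x (vMul y z)
  vOne_mul : ∀ x : V, vMul vOne x = x
  vMul_one : ∀ x : V, vMul x vOne = x
  /-- Cells, indexed by top, bottom (in `H`) and left, right (in `V`) boundaries. -/
  Cell : H → H → V → V → Type
  /-- The horizontal identity cell on `x` (top and bottom boundary the unit). -/
  hid : ∀ x : V, Cell hOne hOne x x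
  /-- The vertical identity cell on `a` (left and right boundary the unit). -/
  vid : ∀ a : H, Cell a a vOne vOne
  /-- Horizontal composition of cells. -/
  hcomp : ∀ {t b t' b' : H} {x y z : V},
    Cell t b x y → Cell t' b' y z → Cell (hMul t t') (hMul b b') x z
  /-- Vertical composition of cells. -/
  vcomp : ∀ {t m b : H} {x y x' y' : V},
    Cell t m x y → Cell m b x' y' → Cell t b (vMul x x') (vMul y y')
  hcomp_assoc : ∀ {t b t' b' t'' b'' : H} {x y z w : V}
    (α : Cell t b x y) (β : Cell t' b' y z) (γ : Cell t'' b'' z w),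
    HEq (hcomp (hcomp α β) γ) (hcomp α (hcomp β γ))
  hid_hcomp : ∀ {t b : H} {x y : V} (α : Cell t b x y), HEq (hcomp (hid x) α) α
  hcomp_hid : ∀ {t b : H} {x y : V} (α : Cell t b x y), HEq (hcomp α (hid y)) α
  vcomp_assoc : ∀ {t m m' b : H} {x y x' y' x'' y'' : V}
    (α : Cell t m x y) (β : Cell m m' x' y') (γ : Cell m' b x'' y''),
    HEq (vcomp (vcomp α β) γ) (vcomp α (vcomp β γ))
  vid_vcomp : ∀ {t b : H} {x y : V} (α : Cell t b x y), HEq (vcomp (vid t) α) α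
  vcomp_vid : ∀ {t b : H} {x y : V} (α : Cell t b x y), HEq (vcomp α (vid b)) α
  /-- The horizontal and vertical identity cells on the units coincide. -/
  square_one : vid hOne = hid vOne
  /-- The interchange law `(α | γ) / (β | δ) = (α / β) | (γ / δ)`. -/
  interchange : ∀ {t m b t' m' b' : H} {x y z x' y' z' : V}
    (α : Cell t m x y) (γ : Cell t' m' y z) (β : Cell m b x' y') (δ : Cell m' b' y' z'),
    vcomp (hcomp α γ) (hcomp β δ) = hcomp (vcomp α β) (vcomp γ δ)
  hid_mul : ∀ x y : V, HEq (vcomp (hid x) (hid y)) (hid (vMul x y))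
  vid_mul : ∀ a b : H, HEq (hcomp (vid a) (vid b)) (vid (hMul a b))

namespace SODC

/-- Transport a cell along equalities of its boundaries. -/
def cast (D : SODC) {t t' b b' : D.H} {l l' r r' : D.V}
    (ht : t = t') (hb : b = b') (hl : l = l') (hr : r = r')
    (α : D.Cell t b l r) : D.Cell t' b' l' r' := by
  cases ht; cases hb; cases hl; cases hr; exact α

/-- `X` and `Y` are isomorphic objects of the strict monoidal category `H D` of
horizontal cells of `D`: there are cells (with trivial top and bottom boundary)
`f : X → Y` and `g : Y → X` whose horizontal composites are identities. -/
def HIso (D : SODC) (X Y : D.V) : Prop :=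
  ∃ (f : D.Cell D.hOne D.hOne X Y) (g : D.Cell D.hOne D.hOne Y X),
    HEq (D.hcomp f g) (D.hid X) ∧ HEq (D.hcomp g f) (D.hid Y)

/-- `Y` is a right dual of `X` in the strict monoidal category `H D` of
horizontal cells of `D`: there are a unit `η : I → X ⊗ Y` and a counit
`ε : Y ⊗ X → I` satisfying the two triangle (zig-zag) identities.  (In `H D`,
composition is horizontal composition of cells and the tensor of morphisms is
vertical composition of cells.) -/
def RightDual (D : SODC) (X Y : D.V) : Prop :=
  ∃ (η : D.Cell D.hOne D.hOne D.vOne (D.vMul X Y))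
    (ε : D.Cell D.hOne D.hOne (D.vMul Y X) D.vOne),
    HEq (D.hcomp (D.vcomp η (D.hid X))
          (D.cast rfl rfl (D.vMul_assoc X Y X).symm rfl (D.vcomp (D.hid X) ε)))
        (D.hid X) ∧
    HEq (D.hcomp (D.vcomp (D.hid Y) η)
          (D.cast rfl rfl (D.vMul_assoc Y X Y) rfl (D.vcomp ε (D.hid Y))))
        (D.hid Y)

end SODC

namespace SODC

variable (D : SODC)

theorem cast_heq {t t' b b' : D.H} {l l' r r' : D.V}
    (ht : t = t') (hb : b = b') (hl : l = l') (hr : r = r')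
    (α : D.Cell t b l r) : HEq (D.cast ht hb hl hr α) α := by
  subst ht; subst hb; subst hl; subst hr; rfl

theorem hcongr {t₁ b₁ u₁ v₁ t₂ b₂ u₂ v₂ : D.H} {x₁ y₁ z₁ x₂ y₂ z₂ : D.V}
    (ht : t₁ = t₂) (hb : b₁ = b₂) (hu : u₁ = u₂) (hv : v₁ = v₂)
    (hx : x₁ = x₂) (hy : y₁ = y₂) (hz : z₁ = z₂)
    {α₁ : D.Cell t₁ b₁ x₁ y₁} {β₁ : D.Cell u₁ v₁ y₁ z₁}
    {α₂ : D.Cell t₂ b₂ x₂ y₂} {β₂ : D.Cell u₂ v₂ y₂ z₂}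
    (hα : HEq α₁ α₂) (hβ : HEq β₁ β₂) :
    HEq (D.hcomp α₁ β₁) (D.hcomp α₂ β₂) := by
  subst ht; subst hb; subst hu; subst hv; subst hx; subst hy; subst hz
  rw [eq_of_heq hα, eq_of_heq hβ]

theorem vcongr {t₁ m₁ b₁ t₂ m₂ b₂ : D.H} {x₁ y₁ x₁' y₁' x₂ y₂ x₂' y₂' : D.V}
    (ht : t₁ = t₂) (hm : m₁ = m₂) (hb : b₁ = b₂)
    (hx : x₁ = x₂) (hy : y₁ = y₂) (hx' : x₁' = x₂') (hy' : y₁' = y₂')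
    {α₁ : D.Cell t₁ m₁ x₁ y₁} {β₁ : D.Cell m₁ b₁ x₁' y₁'}
    {α₂ : D.Cell t₂ m₂ x₂ y₂} {β₂ : D.Cell m₂ b₂ x₂' y₂'}
    (hα : HEq α₁ α₂) (hβ : HEq β₁ β₂) :
    HEq (D.vcomp α₁ β₁) (D.vcomp α₂ β₂) := by
  subst ht; subst hm; subst hb; subst hx; subst hy; subst hx'; subst hy'
  rw [eq_of_heq hα, eq_of_heq hβ]

theorem vid_heq {a b : D.H} (h : a = b) : HEq (D.vid a) (D.vid b) := by subst h; rfl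

/-- Sliding an upper-left tile past a lower-right tile, using identity fillers. -/
theorem slideA {t b m c : D.H} {x z : D.V}
    (α : D.Cell t b x D.vOne) (δ : D.Cell m c D.vOne z) :
    HEq (D.vcomp (D.hcomp α (D.vid m)) (D.hcomp (D.vid b) δ)) (D.hcomp α δ) := by
  rw [D.interchange α (D.vid m) (D.vid b) δ]
  exact D.hcongr rfl rfl rfl rfl (D.vMul_one x) (D.vMul_one D.vOne) (D.vOne_mul z)
    (D.vcomp_vid α) (D.vid_vcomp δ)

/-- Sliding an upper-right tile past a lower-left tile, using identity fillers. -/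
theorem slideB {t b m c : D.H} {x z : D.V}
    (α : D.Cell t b D.vOne z) (δ : D.Cell m c x D.vOne) :
    HEq (D.vcomp (D.hcomp (D.vid m) α) (D.hcomp δ (D.vid b))) (D.hcomp δ α) := by
  rw [D.interchange (D.vid m) α δ (D.vid b)]
  exact D.hcongr rfl rfl rfl rfl (D.vOne_mul x) (D.vOne_mul D.vOne) (D.vMul_one z)
    (D.vid_vcomp δ) (D.vcomp_vid α)

end SODC


/-- A cornering structure on a single-object double category `D`.  The vertical
cells of `D` (cells with trivial left and right boundary, composed vertically
and tensored horizontally) form a strict monoidal category `𝔸 = V D`, which is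
required to be symmetric via the braiding cells `braid`; and every object
`a` of `𝔸` (element of `D.H`) has polarized objects `a^∘ = circ a` and
`a^• = bullet a` in `D.V` together with four corner cells satisfying the
yanking equations. -/
structure Cornering (D : SODC) where
  /-- The braiding `σ_{a,b} : a ⊗ b → b ⊗ a` of `𝔸 = V D`, as a vertical cell. -/
  braid : ∀ a b : D.H, D.Cell (D.hMul a b) (D.hMul b a) D.vOne D.vOne
  braid_natural : ∀ {a b c d : D.H}
    (f : D.Cell a b D.vOne D.vOne) (g : D.Cell c d D.vOne D.vOne),
    D.vcomp (D.hcomp f g) (braid b d) = D.vcomp (braid a c) (D.hcomp g f)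
  braid_symm : ∀ a b : D.H, HEq (D.vcomp (braid a b) (braid b a)) (D.vid (D.hMul a b))
  braid_hexagon : ∀ a b c : D.H,
    HEq (braid (D.hMul a b) c)
      (D.vcomp (D.hcomp (D.vid a) (braid b c))
        (D.cast (D.hMul_assoc a c b) (D.hMul_assoc c a b) rfl rfl
          (D.hcomp (braid a c) (D.vid b))))
  /-- The polarized object `a^∘`. -/
  circ : D.H → D.V
  /-- The polarized object `a^•`. -/
  bullet : D.H → D.V
  /-- The `∘`-send corner: top `a`, bottom `I`, left `I`, right `a^∘`. -/
  csend : ∀ a : D.H, D.Cell a D.hOne D.vOne (circ a)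
  /-- The `∘`-receive corner: top `I`, bottom `a`, left `a^∘`, right `I`. -/
  crecv : ∀ a : D.H, D.Cell D.hOne a (circ a) D.vOne
  /-- The `•`-send corner: top `a`, bottom `I`, left `a^•`, right `I`. -/
  bsend : ∀ a : D.H, D.Cell a D.hOne (bullet a) D.vOne
  /-- The `•`-receive corner: top `I`, bottom `a`, left `I`, right `a^•`. -/
  brecv : ∀ a : D.H, D.Cell D.hOne a D.vOne (bullet a)
  yank_circ_h : ∀ a : D.H, HEq (D.hcomp (csend a) (crecv a)) (D.vid a)
  yank_circ_v : ∀ a : D.H, HEq (D.vcomp (crecv a) (csend a)) (D.hid (circ a))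
  yank_bullet_h : ∀ a : D.H, HEq (D.hcomp (brecv a) (bsend a)) (D.vid a)
  yank_bullet_v : ∀ a : D.H, HEq (D.vcomp (brecv a) (bsend a)) (D.hid (bullet a))

/-- A compact closed structure on the symmetric strict monoidal category
`𝔸 = V D` of vertical cells of `D`: every object `a` has a chosen dual
`dual a` with unit `η_a : I → a ⊗ a*` and counit `ε_a : a* ⊗ a → I`
(as vertical cells) satisfying the triangle (snake) identities. -/
structure CompactStructure (D : SODC) where
  dual : D.H → D.H
  eta : ∀ a : D.H, D.Cell D.hOne (D.hMul a (dual a)) D.vOne D.vOne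
  eps : ∀ a : D.H, D.Cell (D.hMul (dual a) a) D.hOne D.vOne D.vOne
  snake₁ : ∀ a : D.H,
    HEq (D.vcomp (D.hcomp (eta a) (D.vid a))
          (D.cast (D.hMul_assoc a (dual a) a).symm rfl rfl rfl
            (D.hcomp (D.vid a) (eps a))))
        (D.vid a)
  snake₂ : ∀ a : D.H,
    HEq (D.vcomp (D.hcomp (D.vid (dual a)) (eta a))
          (D.cast (D.hMul_assoc (dual a) a (dual a)) rfl rfl rfl
            (D.hcomp (eps a) (D.vid (dual a)))))
        (D.vid (dual a))

section Main

variable (D : SODC) (C : Cornering D) (K : CompactStructure D)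

/-- The forward map `a^• → (a*)^∘`. -/
def fcell (a : D.H) : D.Cell D.hOne D.hOne (C.bullet a) (C.circ (K.dual a)) :=
  D.cast rfl (D.hOne_mul D.hOne) (D.vOne_mul _) (D.vOne_mul _)
    (D.vcomp (K.eta a) (D.hcomp (C.bsend a) (C.csend (K.dual a))))

/-- The backward map `(a*)^∘ → a^•`. -/
def gcell (a : D.H) : D.Cell D.hOne D.hOne (C.circ (K.dual a)) (C.bullet a) :=
  D.cast (D.hOne_mul D.hOne) rfl (D.vMul_one _) (D.vMul_one _)
    (D.vcomp (D.hcomp (C.crecv (K.dual a)) (C.brecv a)) (K.eps a))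

theorem fg_heq (a : D.H) :
    HEq (D.hcomp (fcell D C K a) (gcell D C K a)) (D.hid (C.bullet a)) := by
  set d := K.dual a with hd
  set η := K.eta a with hη
  set ε := K.eps a with hε
  set sb := C.bsend a with hsb
  set rb := C.brecv a with hrb
  set sc := C.csend d with hsc
  set rc := C.crecv d with hrc
  set B := D.hcomp sb sc with hB
  set Γ := D.hcomp rc rb with hΓ
  set F0 := D.vcomp η B with hF0
  set G0 := D.vcomp Γ ε with hG0
  set R1 := D.hcomp η (D.vid (D.hMul D.hOne D.hOne)) with hR1
  set R2 := D.hcomp B Γ with hR2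
  set R3 := D.hcomp (D.vid (D.hMul D.hOne D.hOne)) ε with hR3
  set U := D.vcomp B (D.vid (D.hMul D.hOne D.hOne)) with hU
  set W := D.vcomp (D.vcomp R1 R2) R3 with hW
  -- Step 1 : W ≈ hcomp f g
  have h1 : HEq W (D.vcomp R1 (D.vcomp R2 R3)) := D.vcomp_assoc R1 R2 R3
  have h2 : D.vcomp R2 R3 = D.hcomp U G0 :=
    D.interchange B Γ (D.vid (D.hMul D.hOne D.hOne)) ε
  have h3 : HEq W (D.vcomp R1 (D.hcomp U G0)) := h2 ▸ h1
  have h4 : D.vcomp R1 (D.hcomp U G0)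
      = D.hcomp (D.vcomp η U) (D.vcomp (D.vid (D.hMul D.hOne D.hOne)) G0) :=
    D.interchange η (D.vid (D.hMul D.hOne D.hOne)) U G0
  have h5 : HEq (D.vcomp η U) (fcell D C K a) := by
    have hU' : HEq U B := D.vcomp_vid B
    have : HEq (D.vcomp η U) F0 :=
      D.vcongr rfl rfl rfl rfl rfl (by simp only [D.vMul_one]) (by simp only [D.vMul_one])
        (HEq.refl η) hU'
    exact this.trans (D.cast_heq _ _ _ _ _).symm
  have h6 : HEq (D.vcomp (D.vid (D.hMul D.hOne D.hOne)) G0) (gcell D C K a) :=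
    (D.vid_vcomp G0).trans (D.cast_heq _ _ _ _ _).symm
  have hWfg : HEq W (D.hcomp (fcell D C K a) (gcell D C K a)) := by
    refine (h3.trans (heq_of_eq h4)).trans
      (D.hcongr rfl ?_ ?_ rfl ?_ ?_ ?_ h5 h6) <;>
      simp only [D.hOne_mul, D.hMul_one, D.vOne_mul, D.vMul_one, hd]
  -- Step 2 : replace B|Γ by sb|(vid d)|rb  (yank the ∘-corners)
  set Row2R := D.hcomp sb (D.hcomp (D.vid d) rb) with hRow2R
  have hBΓ : HEq R2 Row2R := by
    have a1 : HEq R2 (D.hcomp sb (D.hcomp sc Γ)) := D.hcomp_assoc sb sc Γ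
    have a2 : HEq (D.hcomp sc Γ) (D.hcomp (D.hcomp sc rc) rb) := (D.hcomp_assoc sc rc rb).symm
    have a3 : HEq (D.hcomp (D.hcomp sc rc) rb) (D.hcomp (D.vid d) rb) := by
      refine D.hcongr ?_ ?_ rfl rfl rfl rfl rfl (C.yank_circ_h d) (HEq.refl rb) <;>
        simp only [D.hOne_mul, D.hMul_one]
    have a5 : HEq (D.hcomp sb (D.hcomp sc Γ)) Row2R := by
      refine D.hcongr rfl rfl ?_ ?_ rfl rfl rfl (HEq.refl sb) (a2.trans a3) <;>
        simp only [D.hOne_mul, D.hMul_one]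
    exact a1.trans a5
  set Row2RC := D.cast
    (show D.hMul a (D.hMul d D.hOne) = D.hMul (D.hMul a d) (D.hMul D.hOne D.hOne) by
      simp only [D.hMul_one, D.hMul_assoc])
    (show D.hMul D.hOne (D.hMul d a) = D.hMul (D.hMul D.hOne D.hOne) (D.hMul d a) by
      simp only [D.hOne_mul])
    rfl rfl Row2R with hRow2RC
  set W2 := D.vcomp (D.vcomp R1 Row2RC) R3 with hW2d
  have hW2 : HEq W W2 := by
    refine D.vcongr rfl ?_ rfl ?_ ?_ rfl rfl
      (D.vcongr rfl ?_ rfl rfl rfl ?_ ?_ (HEq.refl R1)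
        (hBΓ.trans (D.cast_heq _ _ _ _ _).symm)) (HEq.refl R3) <;>
      simp only [D.hOne_mul, D.hMul_one, D.hMul_assoc, D.vOne_mul, D.vMul_one]
  -- Step 3 : split the middle row in two
  set upper := D.hcomp (D.vid (D.hMul a d)) rb with hupper
  set low2 := D.hcomp (D.hcomp sb (D.vid d)) (D.vid a) with hlow2
  have hUL : HEq Row2R (D.vcomp upper low2) := by
    have i1 : D.vcomp upper low2
        = D.hcomp (D.vcomp (D.vid (D.hMul a d)) (D.hcomp sb (D.vid d)))
            (D.vcomp rb (D.vid a)) :=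
      D.interchange (D.vid (D.hMul a d)) rb (D.hcomp sb (D.vid d)) (D.vid a)
    have i2 : HEq (D.vcomp (D.vid (D.hMul a d)) (D.hcomp sb (D.vid d)))
        (D.hcomp sb (D.vid d)) := D.vid_vcomp _
    have i3 : HEq (D.vcomp rb (D.vid a)) rb := D.vcomp_vid rb
    have i4 : HEq (D.vcomp upper low2) (D.hcomp (D.hcomp sb (D.vid d)) rb) := by
      refine (heq_of_eq i1).trans (D.hcongr rfl rfl rfl rfl ?_ ?_ ?_ i2 i3) <;>
        simp only [D.vOne_mul, D.vMul_one]
    exact (i4.trans (D.hcomp_assoc sb (D.vid d) rb)).symm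
  -- Step 4 : four-row form T4
  set upperC := D.cast
    (show D.hMul (D.hMul a d) D.hOne = D.hMul (D.hMul a d) (D.hMul D.hOne D.hOne) by
      simp only [D.hOne_mul]) rfl rfl rfl upper with hupperC
  set R3C2 := D.cast
    (show D.hMul (D.hMul D.hOne D.hOne) (D.hMul d a) = D.hMul (D.hMul D.hOne d) a by
      simp only [D.hOne_mul, D.hMul_assoc]) rfl rfl rfl R3 with hR3C2
  set T4 := D.vcomp (D.vcomp (D.vcomp R1 upperC) low2) R3C2 with hT4d
  have hT4 : HEq W2 T4 := by
    have j1 : HEq Row2RC (D.vcomp upperC low2) := by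
      refine ((D.cast_heq _ _ _ _ _).trans hUL).trans
        (D.vcongr ?_ rfl rfl rfl rfl rfl rfl (D.cast_heq _ _ _ _ _).symm (HEq.refl low2))
      simp only [D.hOne_mul]
    have j2 : HEq (D.vcomp R1 Row2RC) (D.vcomp (D.vcomp R1 upperC) low2) := by
      refine (D.vcongr rfl ?_ ?_ rfl rfl ?_ ?_ (HEq.refl R1) j1).trans
        (D.vcomp_assoc R1 upperC low2).symm <;>
        simp only [D.hOne_mul, D.hMul_one, D.hMul_assoc, D.vOne_mul, D.vMul_one]
    refine D.vcongr rfl ?_ rfl ?_ ?_ rfl rfl j2 (D.cast_heq _ _ _ _ _).symm <;>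
      simp only [D.hOne_mul, D.hMul_one, D.hMul_assoc, D.vOne_mul, D.vMul_one]
  -- Step 5 : T4 ≈ Y2  (two-row snake form)
  set rbX := D.cast (D.hOne_mul D.hOne).symm rfl rfl rfl rb with hrbX
  set upper2 := D.hcomp (D.vid (D.hMul a d)) rbX with hupper2
  set Y2r1 := D.hcomp η rb with hY2r1
  have kk : HEq (D.vcomp R1 upperC) Y2r1 := by
    have k1 : HEq upperC upper2 := by
      refine (D.cast_heq _ _ _ _ _).trans
        (D.hcongr rfl rfl ?_ rfl rfl rfl rfl (HEq.refl _) (D.cast_heq _ _ _ _ _).symm)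
      simp only [D.hOne_mul]
    have k2 : HEq (D.vcomp R1 upperC) (D.vcomp R1 upper2) :=
      D.vcongr rfl rfl rfl rfl rfl rfl rfl (HEq.refl R1) k1
    have k3 : HEq (D.vcomp R1 upper2) (D.hcomp η rbX) := D.slideA η rbX
    have k4 : HEq (D.hcomp η rbX) Y2r1 := by
      refine D.hcongr rfl rfl ?_ rfl rfl rfl rfl (HEq.refl η) (D.cast_heq _ _ _ _ _)
      simp only [D.hOne_mul]
    exact (k2.trans k3).trans k4
  set low3 := D.hcomp sb (D.vid (D.hMul d a)) with hlow3
  set R3'' := D.hcomp (D.vid D.hOne) ε with hR3''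
  set Y2r2 := D.hcomp sb ε with hY2r2
  have mm : HEq (D.vcomp low2 R3C2) Y2r2 := by
    have m1 : HEq low2 low3 := by
      refine (D.hcomp_assoc sb (D.vid d) (D.vid a)).trans
        (D.hcongr rfl rfl rfl rfl rfl rfl ?_ (HEq.refl sb) (D.vid_mul d a))
      simp only [D.vMul_one]
    have m4 : HEq R3C2 R3'' := by
      refine (D.cast_heq _ _ _ _ _).trans
        (D.hcongr ?_ ?_ rfl rfl rfl rfl rfl (D.vid_heq ?_) (HEq.refl ε)) <;>
        simp only [D.hOne_mul]
    have m5 : HEq (D.vcomp low2 R3C2) (D.vcomp low3 R3'') := by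
      refine D.vcongr ?_ ?_ ?_ rfl rfl rfl rfl m1 m4 <;>
        simp only [D.hOne_mul, D.hMul_one, D.hMul_assoc]
    exact m5.trans (D.slideA sb ε)
  set Y2r2C := D.cast (D.hMul_assoc a d a).symm rfl rfl rfl Y2r2 with hY2r2C
  set Y2 := D.vcomp Y2r1 Y2r2C with hY2d
  have hY2 : HEq T4 Y2 := by
    refine (D.vcomp_assoc (D.vcomp R1 upperC) low2 R3C2).trans
      (D.vcongr ?_ ?_ ?_ ?_ ?_ ?_ ?_ kk (mm.trans (D.cast_heq _ _ _ _ _).symm)) <;>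
      simp only [D.hOne_mul, D.hMul_one, D.hMul_assoc, D.vOne_mul, D.vMul_one, hd]
  -- Step 6 : Y2 ≈ hid (bullet a)  via the snake identity and yanking
  set A1 := D.hcomp (D.vid D.hOne) rb with hA1
  set A2 := D.hcomp η (D.vid a) with hA2
  set A3 := D.hcomp (D.vid a) ε with hA3
  set A3C := D.cast (D.hMul_assoc a d a).symm rfl rfl rfl A3 with hA3C
  set A4 := D.hcomp sb (D.vid D.hOne) with hA4
  have n1 : HEq Y2r1 (D.vcomp A1 A2) := (D.slideB rb η).symm
  have n2 : HEq Y2r2 (D.vcomp A3 A4) := (D.slideB ε sb).symm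
  have n3 : HEq Y2r2C (D.vcomp A3C A4) := by
    refine ((D.cast_heq _ _ _ _ _).trans n2).trans
      (D.vcongr ?_ rfl rfl rfl rfl rfl rfl (D.cast_heq _ _ _ _ _).symm (HEq.refl A4))
    simp only [D.hMul_assoc, hd]
  have n4 : HEq Y2 (D.vcomp (D.vcomp A1 A2) (D.vcomp A3C A4)) := by
    refine D.vcongr rfl ?_ ?_ ?_ ?_ ?_ ?_ n1 n3 <;>
      simp only [D.hOne_mul, D.hMul_one, D.hMul_assoc, D.vOne_mul, D.vMul_one]
  have n5 : HEq (D.vcomp (D.vcomp A1 A2) (D.vcomp A3C A4))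
      (D.vcomp (D.vcomp A1 (D.vcomp A2 A3C)) A4) := by
    refine (D.vcomp_assoc (D.vcomp A1 A2) A3C A4).symm.trans
      (D.vcongr rfl rfl rfl ?_ ?_ rfl rfl (D.vcomp_assoc A1 A2 A3C) (HEq.refl A4)) <;>
      simp only [D.vMul_assoc]
  have n7 : HEq (D.vcomp A2 A3C) (D.vid a) := K.snake₁ a
  have n8 : HEq (D.vcomp A1 (D.vcomp A2 A3C)) rb := by
    set A1X := D.cast rfl (D.hOne_mul a) rfl rfl A1 with hA1X
    have : HEq (D.vcomp A1 (D.vcomp A2 A3C)) (D.vcomp A1X (D.vid a)) := by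
      refine D.vcongr rfl ?_ ?_ rfl rfl ?_ ?_ (D.cast_heq _ _ _ _ _).symm n7 <;>
        simp only [D.hOne_mul, D.hMul_one, D.vOne_mul, D.vMul_one]
    refine (this.trans (D.vcomp_vid A1X)).trans ((D.cast_heq _ _ _ _ _).trans ?_)
    rw [hA1, D.square_one]
    exact D.hid_hcomp rb
  have n9 : HEq A4 sb := by rw [hA4, D.square_one]; exact D.hcomp_hid sb
  have n10 : HEq (D.vcomp (D.vcomp A1 (D.vcomp A2 A3C)) A4) (D.vcomp rb sb) := by
    refine D.vcongr ?_ ?_ ?_ ?_ ?_ ?_ ?_ n8 n9 <;>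
      simp only [D.hOne_mul, D.hMul_one, D.vOne_mul, D.vMul_one, D.vMul_assoc]
  have final : HEq Y2 (D.hid (C.bullet a)) :=
    ((n4.trans n5).trans n10).trans (C.yank_bullet_v a)
  exact hWfg.symm.trans ((hW2.trans (hT4.trans hY2)).trans final)


theorem gf_heq (a : D.H) :
    HEq (D.hcomp (gcell D C K a) (fcell D C K a)) (D.hid (C.circ (K.dual a))) := by
  set d := K.dual a with hd
  set η := K.eta a with hη
  set ε := K.eps a with hε
  set sb := C.bsend a with hsb
  set rb := C.brecv a with hrb
  set sc := C.csend d with hsc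
  set rc := C.crecv d with hrc
  set B := D.hcomp sb sc with hB
  set Γ := D.hcomp rc rb with hΓ
  set F0 := D.vcomp η B with hF0
  set G0 := D.vcomp Γ ε with hG0
  set S := D.hcomp sb (D.vid d) with hS
  set T := D.hcomp (D.vid D.hOne) sc with hT
  set r1 := D.hcomp (D.vid (D.hMul D.hOne D.hOne)) η with hr1
  set r2 := D.hcomp Γ S with hr2
  set r3 := D.hcomp ε T with hr3
  set W := D.vcomp (D.vcomp r1 r2) r3 with hWd
  -- Step 1 : W ≈ hcomp g f
  have p1 : HEq W (D.vcomp r1 (D.vcomp r2 r3)) := D.vcomp_assoc r1 r2 r3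
  have p2 : D.vcomp r2 r3 = D.hcomp G0 (D.vcomp S T) := D.interchange Γ S ε T
  have p3 : HEq W (D.vcomp r1 (D.hcomp G0 (D.vcomp S T))) := p2 ▸ p1
  have p4 : D.vcomp r1 (D.hcomp G0 (D.vcomp S T))
      = D.hcomp (D.vcomp (D.vid (D.hMul D.hOne D.hOne)) G0) (D.vcomp η (D.vcomp S T)) :=
    D.interchange (D.vid (D.hMul D.hOne D.hOne)) η G0 (D.vcomp S T)
  have p5 : HEq (D.vcomp (D.vid (D.hMul D.hOne D.hOne)) G0) (gcell D C K a) :=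
    (D.vid_vcomp G0).trans (D.cast_heq _ _ _ _ _).symm
  have p6 : HEq (D.vcomp S T) B := by
    refine (heq_of_eq (D.interchange sb (D.vid d) (D.vid D.hOne) sc)).trans
      (D.hcongr rfl rfl rfl rfl ?_ ?_ ?_ (D.vcomp_vid sb) (D.vid_vcomp sc)) <;>
      simp only [D.vOne_mul, D.vMul_one]
  have p7 : HEq (D.vcomp η (D.vcomp S T)) (fcell D C K a) := by
    refine (D.vcongr rfl rfl ?_ rfl rfl ?_ ?_ (HEq.refl η) p6).trans
      (D.cast_heq _ _ _ _ _).symm <;>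
      simp only [D.vOne_mul, D.vMul_one]
  have hWgf : HEq W (D.hcomp (gcell D C K a) (fcell D C K a)) := by
    refine (p3.trans (heq_of_eq p4)).trans (D.hcongr ?_ ?_ ?_ ?_ ?_ ?_ ?_ p5 p7) <;>
      simp only [D.hOne_mul, D.hMul_one, D.vOne_mul, D.vMul_one, hd]
  -- Step 2 : yank the •-corners : r2 ≈ rc | vid (a⊗d)
  set r2Y := D.hcomp rc (D.vid (D.hMul a d)) with hr2Y
  have q5 : HEq r2 r2Y := by
    have q1 : HEq r2 (D.hcomp rc (D.hcomp rb S)) := D.hcomp_assoc rc rb S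
    have q2 : HEq (D.hcomp rb S) (D.hcomp (D.hcomp rb sb) (D.vid d)) :=
      (D.hcomp_assoc rb sb (D.vid d)).symm
    have q3 : HEq (D.hcomp (D.hcomp rb sb) (D.vid d)) (D.hcomp (D.vid a) (D.vid d)) := by
      refine D.hcongr ?_ ?_ rfl rfl rfl rfl rfl (C.yank_bullet_h a) (HEq.refl _) <;>
        simp only [D.hOne_mul, D.hMul_one]
    have q4 : HEq (D.hcomp rb S) (D.vid (D.hMul a d)) :=
      q2.trans (q3.trans (D.vid_mul a d))
    refine q1.trans (D.hcongr rfl rfl ?_ ?_ rfl rfl rfl (HEq.refl rc) q4) <;>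
      simp only [D.hOne_mul, D.hMul_one, D.hMul_assoc]
  set r2YC := D.cast
    (show D.hMul D.hOne (D.hMul a d)
        = D.hMul (D.hMul D.hOne D.hOne) (D.hMul a d) by simp only [D.hOne_mul])
    (show D.hMul d (D.hMul a d)
        = D.hMul (D.hMul d a) (D.hMul D.hOne d) by
      simp only [D.hOne_mul, D.hMul_assoc])
    rfl rfl r2Y with hr2YC
  set W3 := D.vcomp (D.vcomp r1 r2YC) r3 with hW3d
  have q6 : HEq W W3 := by
    refine D.vcongr rfl ?_ rfl rfl rfl rfl rfl
      (D.vcongr rfl ?_ rfl rfl rfl ?_ ?_ (HEq.refl r1)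
        (q5.trans (D.cast_heq _ _ _ _ _).symm)) (HEq.refl r3) <;>
      simp only [D.hOne_mul, D.hMul_one, D.hMul_assoc, D.vOne_mul, D.vMul_one]
  -- Step 3 : rows (1,2) combine to rc | η
  set rcX := D.cast (D.hOne_mul D.hOne).symm rfl rfl rfl rc with hrcX
  set r2Y2 := D.hcomp rcX (D.vid (D.hMul a d)) with hr2Y2
  set Yr1 := D.hcomp rc η with hYr1
  have s4 : HEq (D.vcomp r1 r2YC) Yr1 := by
    have s1 : HEq r2YC r2Y2 := by
      refine (D.cast_heq _ _ _ _ _).trans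
        (D.hcongr ?_ rfl rfl rfl rfl rfl rfl (D.cast_heq _ _ _ _ _).symm (HEq.refl _))
      simp only [D.hOne_mul]
    have s2 : HEq (D.vcomp r1 r2Y2) (D.hcomp rcX η) := D.slideB η rcX
    have s3 : HEq (D.hcomp rcX η) Yr1 := by
      refine D.hcongr ?_ rfl rfl rfl rfl rfl rfl (D.cast_heq _ _ _ _ _) (HEq.refl η)
      simp only [D.hOne_mul]
    refine (D.vcongr rfl rfl ?_ rfl rfl rfl rfl (HEq.refl r1) s1).trans (s2.trans s3)
    simp only [D.hOne_mul, D.hMul_assoc]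
  set r3C := D.cast
    (show D.hMul (D.hMul d a) (D.hMul D.hOne d) = D.hMul d (D.hMul a d) by
      simp only [D.hOne_mul, D.hMul_assoc])
    rfl rfl rfl r3 with hr3C
  set W4 := D.vcomp Yr1 r3C with hW4d
  have s5 : HEq W3 W4 := by
    refine D.vcongr ?_ ?_ rfl ?_ ?_ rfl rfl s4 (D.cast_heq _ _ _ _ _).symm <;>
      simp only [D.hOne_mul, D.hMul_one, D.hMul_assoc, D.vOne_mul, D.vMul_one, hd]
  -- Step 4 : snake₂ and the ∘-yank
  have u1 : HEq T sc := by rw [hT, D.square_one]; exact D.hid_hcomp sc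
  set Yr2 := D.hcomp ε sc with hYr2
  have u2 : HEq r3 Yr2 := by
    refine D.hcongr rfl rfl ?_ ?_ rfl rfl rfl (HEq.refl ε) u1 <;>
      simp only [D.hOne_mul]
  set t3 := D.hcomp ε (D.vid d) with ht3
  have u3 : HEq Yr2 (D.vcomp t3 T) := (D.slideA ε sc).symm
  set t3C := D.cast (D.hMul_assoc d a d) rfl rfl rfl t3 with ht3C
  set t1 := D.hcomp rc (D.vid D.hOne) with ht1
  set t2 := D.hcomp (D.vid d) η with ht2
  have u4 : HEq Yr1 (D.vcomp t1 t2) := (D.slideA rc η).symm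
  have v1 : HEq r3C (D.vcomp t3C T) := by
    refine (D.cast_heq _ _ _ _ _).trans (u2.trans (u3.trans
      (D.vcongr ?_ rfl rfl rfl rfl rfl rfl (D.cast_heq _ _ _ _ _).symm (HEq.refl T))))
    simp only [D.hMul_assoc, hd]
  have v2 : HEq W4 (D.vcomp (D.vcomp t1 t2) (D.vcomp t3C T)) := by
    refine D.vcongr rfl ?_ ?_ ?_ ?_ ?_ ?_ u4 v1 <;>
      simp only [D.hOne_mul, D.hMul_one, D.hMul_assoc, D.vOne_mul, D.vMul_one]
  have v3 : HEq (D.vcomp (D.vcomp t1 t2) (D.vcomp t3C T))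
      (D.vcomp (D.vcomp t1 (D.vcomp t2 t3C)) T) := by
    refine (D.vcomp_assoc (D.vcomp t1 t2) t3C T).symm.trans
      (D.vcongr rfl rfl rfl ?_ ?_ rfl rfl (D.vcomp_assoc t1 t2 t3C) (HEq.refl T)) <;>
      simp only [D.vMul_assoc]
  have v4 : HEq (D.vcomp t2 t3C) (D.vid d) := K.snake₂ a
  have v5 : HEq (D.vcomp t1 (D.vcomp t2 t3C)) rc := by
    set t1X := D.cast rfl (D.hMul_one d) rfl rfl t1 with ht1X
    have : HEq (D.vcomp t1 (D.vcomp t2 t3C)) (D.vcomp t1X (D.vid d)) := by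
      refine D.vcongr rfl ?_ ?_ rfl rfl ?_ ?_ (D.cast_heq _ _ _ _ _).symm v4 <;>
        simp only [D.hOne_mul, D.hMul_one, D.vOne_mul, D.vMul_one]
    refine (this.trans (D.vcomp_vid t1X)).trans ((D.cast_heq _ _ _ _ _).trans ?_)
    rw [ht1, D.square_one]
    exact D.hcomp_hid rc
  have v7 : HEq (D.vcomp (D.vcomp t1 (D.vcomp t2 t3C)) T) (D.vcomp rc sc) := by
    refine D.vcongr ?_ ?_ ?_ ?_ ?_ ?_ ?_ v5 u1 <;>
      simp only [D.hOne_mul, D.hMul_one, D.vOne_mul, D.vMul_one, D.vMul_assoc]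
  have final : HEq W4 (D.hid (C.circ d)) :=
    (v2.trans (v3.trans v7)).trans (C.yank_circ_v d)
  exact hWgf.symm.trans (q6.trans (s5.trans final))

end Main

/-- Let `𝔸` be a compact closed symmetric strict monoidal
category and `D` a cornering of `𝔸`.  Then for every object `A` of `𝔸` there is
an isomorphism `A^• ≅ (A*)^∘` in the strict monoidal category `H D` of
horizontal cells of `D`, where `A*` is the dual of `A` in `𝔸`. -/
theorem bullet_iso_circ_dual (D : SODC) (C : Cornering D) (K : CompactStructure D) :
    ∀ a : D.H, D.HIso (C.bullet a) (C.circ (K.dual a)) := fun a =>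
  ⟨fcell D C K a, gcell D C K a, fg_heq D C K a, gf_heq D C K a⟩
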